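/- If f : ℝⁿ → ℝ is homogeneous of degree 2d and f₂ : ℝ^b → ℝ satisfies f(ξ, y, z) ≥ ε‖(ξ,y,z)‖₂^{2d} for all (ξ,y,z), and h(y) = min_ξ ( f₁(ξ,y) − (ε/2)‖(ξ,y)‖₂^{2d} ) where f = f₁ + f₂ with f₁ depending on (ξ,y) and f₂ on (y,z), then f₂(y,z) + h(y) ≥ (ε/2)‖(y,z)‖₂^{2d} for all (y,z). -/
import Mathlib


theorem stmt_9 (a b c d : ℕ) (hd : 1 ≤ d) (ε : ℝ) (hε : 0 < ε)
    (f₁ : EuclideanSpace ℝ (Fin a) × EuclideanSpace ℝ (Fin b) → ℝ)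
    (f₂ : EuclideanSpace ℝ (Fin b) × EuclideanSpace ℝ (Fin c) → ℝ)
    (hc₁ : Continuous f₁) (hc₂ : Continuous f₂)
    (hhom₁ : ∀ (t : ℝ) ξ y, f₁ (t • ξ, t • y) = t ^ (2 * d) * f₁ (ξ, y))
    (hhom₂ : ∀ (t : ℝ) y z, f₂ (t • y, t • z) = t ^ (2 * d) * f₂ (y, z))
    (hpos : ∀ ξ y z, ε * (‖ξ‖ ^ 2 + ‖y‖ ^ 2 + ‖z‖ ^ 2) ^ d ≤ f₁ (ξ, y) + f₂ (y, z))
    (h : EuclideanSpace ℝ (Fin b) → ℝ)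
    (hmin : ∀ y : EuclideanSpace ℝ (Fin b),
      ∃ ξ₀ : EuclideanSpace ℝ (Fin a),
        h y = f₁ (ξ₀, y) - ε / 2 * (‖ξ₀‖ ^ 2 + ‖y‖ ^ 2) ^ d ∧
        ∀ ξ, h y ≤ f₁ (ξ, y) - ε / 2 * (‖ξ‖ ^ 2 + ‖y‖ ^ 2) ^ d) :
    ∀ (y : EuclideanSpace ℝ (Fin b)) (z : EuclideanSpace ℝ (Fin c)),
      ε / 2 * (‖y‖ ^ 2 + ‖z‖ ^ 2) ^ d ≤ f₂ (y, z) + h y := by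
  intro y z
  obtain ⟨ξ₀, he, -⟩ := hmin y
  have hp := hpos ξ₀ y z
  have h1 : (‖ξ₀‖ ^ 2 + ‖y‖ ^ 2) ^ d ≤ (‖ξ₀‖ ^ 2 + ‖y‖ ^ 2 + ‖z‖ ^ 2) ^ d := by
    apply pow_le_pow_left₀ (by positivity)
    nlinarith [sq_nonneg ‖z‖]
  have h2 : (‖y‖ ^ 2 + ‖z‖ ^ 2) ^ d ≤ (‖ξ₀‖ ^ 2 + ‖y‖ ^ 2 + ‖z‖ ^ 2) ^ d := by
    apply pow_le_pow_left₀ (by positivity)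
    nlinarith [sq_nonneg ‖ξ₀‖]
  rw [he]
  nlinarith
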